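/- Let a₁, a₂, …, a_k be positive integers with gcd(a₁,…,a_k) = 1, and let λ be a complex number with λ ≠ 0 and λ^{a₁} ≠ 1. Then ∑_{n ∈ NR} λⁿ n = (1/(λ^{a₁} − 1)) ∑_{i=0}^{a₁−1} m_i λ^{m_i} − (a₁ λ^{a₁}/(λ^{a₁} − 1)²) ∑_{i=0}^{a₁−1} λ^{m_i} + λ/(λ − 1)². -/

import Mathlib

lemma weighted_auxD (x : ℂ) (q : ℕ) :
    (∑ t ∈ Finset.range q, (t:ℂ) * x ^ t) * (x - 1) ^ 2
      = (q:ℂ) * x ^ q * (x - 1) - x ^ (q+1) + x := by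
  induction q with
  | zero => simp
  | succ q ih =>
    rw [Finset.sum_range_succ, add_mul, ih]
    push_cast
    ring

lemma weighted_auxT (lam : ℂ) (h1 : lam ≠ 1) (A : ℕ) :
    (lam - 1) * ∑ i ∈ Finset.range A, (i:ℂ) * lam ^ i
      = ((A:ℂ) - 1) * lam ^ A - (∑ i ∈ Finset.range A, lam ^ i) + 1 := by
  have h : lam - 1 ≠ 0 := sub_ne_zero.mpr h1
  apply mul_left_cancel₀ h
  have hg := geom_sum_mul lam A
  have hd := weighted_auxD lam A
  linear_combination hd + hg

/-- the weighted sum `∑_{n ∈ NR} λⁿ n` for `λ ≠ 0`, `λ^{a₁} ≠ 1`. -/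
theorem weighted_sylvester_sum
    (k : ℕ) (hk : 0 < k) (a : Fin k → ℕ) (ha : ∀ i, 0 < a i)
    (hgcd : Finset.univ.gcd a = 1)
    (lam : ℂ) (hlam0 : lam ≠ 0) (hlama : lam ^ a ⟨0, hk⟩ ≠ 1)
    (m : ℕ → ℕ)
    (hm : ∀ i < a ⟨0, hk⟩,
      (∃ x : Fin k → ℕ, m i = ∑ j, x j * a j) ∧ m i % a ⟨0, hk⟩ = i ∧
        ∀ n : ℕ, (∃ x : Fin k → ℕ, n = ∑ j, x j * a j) → n % a ⟨0, hk⟩ = i → m i ≤ n) :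
    ∑ᶠ n ∈ {n : ℕ | 0 < n ∧ ¬∃ x : Fin k → ℕ, n = ∑ j, x j * a j},
        lam ^ n * (n : ℂ) =
      (1 / (lam ^ a ⟨0, hk⟩ - 1)) *
          ∑ i ∈ Finset.range (a ⟨0, hk⟩), (m i : ℂ) * lam ^ m i
        - ((a ⟨0, hk⟩ : ℂ) * lam ^ a ⟨0, hk⟩ / (lam ^ a ⟨0, hk⟩ - 1) ^ 2) *
          ∑ i ∈ Finset.range (a ⟨0, hk⟩), lam ^ m i
        + lam / (lam - 1) ^ 2 := by
  classical
  set i0 : Fin k := ⟨0, hk⟩ with hi0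
  set A := a i0 with hAdef
  have hApos : 0 < A := ha i0
  set x : ℂ := lam ^ A with hxdef
  have hx1 : x - 1 ≠ 0 := sub_ne_zero.mpr hlama
  have hx2 : (x - 1) ^ 2 ≠ 0 := pow_ne_zero _ hx1
  have hlam1 : lam ≠ 1 := by
    rintro rfl; exact hlama (one_pow A)
  have hl1 : lam - 1 ≠ 0 := sub_ne_zero.mpr hlam1
  -- representability is upward closed along multiples of A
  have rep_add_mul : ∀ (t n : ℕ), (∃ y : Fin k → ℕ, n = ∑ j, y j * a j) →
      (∃ y : Fin k → ℕ, n + A * t = ∑ j, y j * a j) := by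
    rintro t n ⟨y, rfl⟩
    refine ⟨fun j => y j + if j = i0 then t else 0, ?_⟩
    have h1 : ∑ j, (y j + if j = i0 then t else 0) * a j
        = (∑ j, y j * a j) + ∑ j, (if j = i0 then t else 0) * a j := by
      rw [← Finset.sum_add_distrib]
      exact Finset.sum_congr rfl (fun j _ => by ring)
    rw [h1]
    have h2 : ∑ j, (if j = i0 then t else 0) * a j = t * a i0 := by
      rw [Finset.sum_eq_single i0]
      · simp
      · intro b _ hb; simp [hb]
      · intro h; exact absurd (Finset.mem_univ i0) h
    rw [h2, mul_comm t (a i0)]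
  have hm0 : m 0 = 0 := by
    have h := (hm 0 hApos).2.2 0 ⟨0, by simp⟩ (Nat.zero_mod A)
    omega
  have hrep_iff : ∀ n : ℕ, (∃ y : Fin k → ℕ, n = ∑ j, y j * a j) ↔ m (n % A) ≤ n := by
    intro n
    constructor
    · intro h
      exact (hm (n % A) (Nat.mod_lt _ hApos)).2.2 n h rfl
    · intro h
      obtain ⟨hmr, hmm, _⟩ := hm (n % A) (Nat.mod_lt _ hApos)
      have hdvd : A ∣ n - m (n % A) := (Nat.modEq_iff_dvd' h).mp hmm
      obtain ⟨t, ht⟩ := hdvd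
      have hn : n = m (n % A) + A * t := by omega
      rw [hn]
      exact rep_add_mul t _ hmr
  -- the set of gaps
  have hset : {n : ℕ | 0 < n ∧ ¬∃ y : Fin k → ℕ, n = ∑ j, y j * a j}
      = {n : ℕ | n < m (n % A)} := by
    ext n
    simp only [Set.mem_setOf_eq, hrep_iff n, not_le]
    constructor
    · rintro ⟨_, h2⟩; exact h2
    · intro h
      refine ⟨?_, h⟩
      rcases Nat.eq_zero_or_pos n with rfl | hpos
      · rw [Nat.zero_mod, hm0] at h; omega
      · exact hpos
  set M := (Finset.range A).sup m + 1 with hM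
  have hsub : ∀ n : ℕ, n < m (n % A) → n < M := by
    intro n h
    have h2 : m (n % A) ≤ (Finset.range A).sup m :=
      Finset.le_sup (Finset.mem_range.mpr (Nat.mod_lt _ hApos))
    omega
  set F := (Finset.range M).filter (fun n => n < m (n % A)) with hF
  have hcoe : {n : ℕ | n < m (n % A)} = ↑F := by
    ext n
    simp only [Set.mem_setOf_eq, hF, Finset.coe_filter, Finset.mem_range]
    exact ⟨fun h => ⟨hsub n h, h⟩, fun h => h.2⟩
  rw [hset, hcoe, finsum_mem_coe_finset]
  -- m i decomposition
  have hq : ∀ i, i < A → m i = i + A * (m i / A) := by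
    intro i hi
    have h1 := (hm i hi).2.1
    have h2 := Nat.div_add_mod (m i) A
    omega
  -- reindex the sum over gaps
  have hsum : ∑ n ∈ F, lam ^ n * (n:ℂ)
      = ∑ i ∈ Finset.range A, ∑ t ∈ Finset.range (m i / A),
          lam ^ (i + A * t) * ((i + A * t : ℕ):ℂ) := by
    rw [Finset.sum_sigma']
    refine Finset.sum_nbij' (fun n => ⟨n % A, n / A⟩) (fun p => p.1 + A * p.2) ?_ ?_ ?_ ?_ ?_
    · intro n hn
      simp only [hF, Finset.mem_filter, Finset.mem_range] at hn
      simp only [Finset.mem_sigma, Finset.mem_range]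
      refine ⟨Nat.mod_lt _ hApos, ?_⟩
      have h1 := hq (n % A) (Nat.mod_lt _ hApos)
      have h2 := Nat.div_add_mod n A
      have h3 : A * (n / A) < A * (m (n % A) / A) := by omega
      exact Nat.lt_of_mul_lt_mul_left h3
    · rintro ⟨i, t⟩ hp
      simp only [Finset.mem_sigma, Finset.mem_range] at hp
      simp only [hF, Finset.mem_filter, Finset.mem_range]
      have h1 := hq i hp.1
      have hmod : (i + A * t) % A = i := by
        rw [Nat.add_mul_mod_self_left, Nat.mod_eq_of_lt hp.1]
      have hlt : i + A * t < m i := by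
        have := hp.2
        nlinarith [hp.2, hApos]
      rw [hmod]
      exact ⟨hsub _ (by rw [hmod]; exact hlt), hlt⟩
    · intro n hn
      simp only
      exact Nat.mod_add_div n A
    · rintro ⟨i, t⟩ hp
      simp only [Finset.mem_sigma, Finset.mem_range] at hp
      have hmod : (i + A * t) % A = i := by
        rw [Nat.add_mul_mod_self_left, Nat.mod_eq_of_lt hp.1]
      have hdiv : (i + A * t) / A = t := by
        rw [Nat.add_mul_div_left _ _ hApos, Nat.div_eq_of_lt hp.1, zero_add]
      simp only [hmod, hdiv]
    · intro n hn
      simp only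
      rw [Nat.mod_add_div n A]
  rw [hsum]
  -- closed form for the inner sum
  have key : ∀ i ∈ Finset.range A,
      (∑ t ∈ Finset.range (m i / A), lam ^ (i + A * t) * ((i + A * t : ℕ):ℂ))
      = ((m i:ℂ) * lam ^ (m i) * (x-1) - (i:ℂ) * lam ^ i * (x-1)
          - (A:ℂ) * x * lam ^ (m i) + (A:ℂ) * x * lam ^ i) / (x-1)^2 := by
    intro i hi
    rw [eq_div_iff hx2]
    have hiA := Finset.mem_range.mp hi
    set q := m i / A with hqdef
    have hG := geom_sum_mul x q
    have hD := weighted_auxD x q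
    have hmi := hq i hiA
    have hpow : lam ^ (m i) = lam ^ i * x ^ q := by
      rw [hmi, pow_add, pow_mul]
    have hmc : (m i : ℂ) = (i:ℂ) + (A:ℂ) * (q:ℂ) := by
      exact_mod_cast congrArg (Nat.cast : ℕ → ℂ) hmi
    have hinner : (∑ t ∈ Finset.range q, lam ^ (i + A * t) * ((i + A * t : ℕ):ℂ))
        = (i:ℂ) * lam ^ i * (∑ t ∈ Finset.range q, x ^ t)
          + (A:ℂ) * lam ^ i * (∑ t ∈ Finset.range q, (t:ℂ) * x ^ t) := by
      rw [Finset.mul_sum, Finset.mul_sum, ← Finset.sum_add_distrib]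
      refine Finset.sum_congr rfl (fun t _ => ?_)
      rw [pow_add, pow_mul]
      push_cast
      ring
    rw [hinner, hpow, hmc]
    linear_combination ((i:ℂ) * lam ^ i * (x-1)) * hG + ((A:ℂ) * lam ^ i) * hD
  rw [Finset.sum_congr rfl key]
  set P := ∑ i ∈ Finset.range A, (m i : ℂ) * lam ^ m i with hP
  set Q := ∑ i ∈ Finset.range A, lam ^ m i with hQ
  set S := ∑ i ∈ Finset.range A, lam ^ i with hS
  set T := ∑ i ∈ Finset.range A, (i:ℂ) * lam ^ i with hT
  have hsplit : ∑ i ∈ Finset.range A,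
      (((m i:ℂ) * lam ^ (m i) * (x-1) - (i:ℂ) * lam ^ i * (x-1)
          - (A:ℂ) * x * lam ^ (m i) + (A:ℂ) * x * lam ^ i) / (x-1)^2)
      = ((x-1) * P - (x-1) * T - (A:ℂ) * x * Q + (A:ℂ) * x * S) / (x-1)^2 := by
    rw [← Finset.sum_div]
    congr 1
    rw [hP, hQ, hS, hT, Finset.mul_sum, Finset.mul_sum, Finset.mul_sum, Finset.mul_sum]
    rw [← Finset.sum_sub_distrib, ← Finset.sum_sub_distrib, ← Finset.sum_add_distrib]
    refine Finset.sum_congr rfl (fun i _ => ?_)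
    ring
  rw [hsplit]
  have hGA : S * (lam - 1) = x - 1 := geom_sum_mul lam A
  have hTA : (lam - 1) * T = ((A:ℂ) - 1) * x - S + 1 := weighted_auxT lam hlam1 A
  have hfinal : (lam-1)^2 * ((A:ℂ)*x*S - (x-1)*T) = lam*(x-1)^2 := by
    linear_combination ((A:ℂ)*x*(lam-1) + (x-1)) * hGA - (x-1)*(lam-1) * hTA
  have hden : (x-1)^2 * (lam-1)^2 ≠ 0 := mul_ne_zero hx2 (pow_ne_zero _ hl1)
  apply mul_right_cancel₀ hden
  have hL : ((x-1)*P - (x-1)*T - (A:ℂ)*x*Q + (A:ℂ)*x*S)/(x-1)^2 * ((x-1)^2*(lam-1)^2)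
      = ((x-1)*P - (x-1)*T - (A:ℂ)*x*Q + (A:ℂ)*x*S) * (lam-1)^2 := by
    field_simp
  have hR : (1/(x-1)*P - (A:ℂ)*x/(x-1)^2*Q + lam/(lam-1)^2) * ((x-1)^2*(lam-1)^2)
      = (lam-1)^2*(x-1)*P - (lam-1)^2*(A:ℂ)*x*Q + lam*(x-1)^2 := by
    field_simp
  rw [hL, hR]
  linear_combination hfinal
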